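/- Let H be a Hopf algebra and B an algebra. Given a convolution invertible linear map τ : H → B with τ(1)=1, the map α_r : B ⊗ H → B ⊗ H defined by α_r(a ⊗ h) = Σ τ(h₁)·a ⊗ h₂ is a right B-module automorphism of B ⊗ H (for the module structure (b ⊗ h)·a = ba ⊗ h) satisfying (α_r ⊗ id)∘(id ⊗ Δ) = (id ⊗ Δ)∘α_r and α_r(a ⊗ 1) = a ⊗ 1, where the inverse is given by (a ⊗ h) ↦ Σ τ'(h₁)·a ⊗ h₂ with τ' satisfying the twisted convolution inverse condition Σ τ'(h₂)τ(h₁) = Σ τ(h₂)τ'(h₁) = ε(h)1. -/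

import Mathlib

open TensorProduct

variable {k : Type*} [Field k]
variable {H : Type*} [Ring H] [HopfAlgebra k H]
variable {B : Type*} [Ring B] [Algebra k B]

/-- Convolution product of two linear maps `H →ₗ[k] B`. -/
noncomputable def conv (f g : H →ₗ[k] B) : H →ₗ[k] B :=
  LinearMap.mul' k B ∘ₗ TensorProduct.map f g ∘ₗ Coalgebra.comul

/-- Twisted convolution: `(f ⋆' g)(h) = Σ f(h₂)·g(h₁)`. -/
noncomputable def twistedConv (f g : H →ₗ[k] B) : H →ₗ[k] B :=
  LinearMap.mul' k B ∘ₗ TensorProduct.map f g ∘ₗ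
    (TensorProduct.comm k H H).toLinearMap ∘ₗ Coalgebra.comul

/-- The unit of the convolution algebra: `h ↦ ε(h)·1`. -/
noncomputable def convUnit : H →ₗ[k] B :=
  Algebra.linearMap k B ∘ₗ Coalgebra.counit

/-- The right gauge transformation on `B ⊗ H` associated to `τ : H → B`:
`a ⊗ h ↦ Σ τ(h₁)·a ⊗ h₂`. -/
noncomputable def gaugeMapR (τ : H →ₗ[k] B) : B ⊗[k] H →ₗ[k] B ⊗[k] H :=
  (TensorProduct.map (LinearMap.mul' k B ∘ₗ (TensorProduct.comm k B B).toLinearMap)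
      LinearMap.id) ∘ₗ
    (TensorProduct.assoc k B B H).symm.toLinearMap ∘ₗ
    (TensorProduct.map LinearMap.id
      ((TensorProduct.map τ LinearMap.id) ∘ₗ (Coalgebra.comul : H →ₗ[k] H ⊗[k] H)))

lemma gauge_apply (f : H →ₗ[k] B) (a : B) (h : H) :
    gaugeMapR f (a ⊗ₜ[k] h)
      = TensorProduct.map ((LinearMap.mulRight k a) ∘ₗ f) LinearMap.id
          (Coalgebra.comul h) := by
  simp only [gaugeMapR, LinearMap.comp_apply, TensorProduct.map_tmul, LinearMap.id_apply]
  generalize (Coalgebra.comul h : H ⊗[k] H) = x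
  induction x using TensorProduct.induction_on with
  | zero => simp only [tmul_zero, map_zero]
  | tmul p q => simp [LinearMap.mul'_apply]
  | add u v hu hv =>
      simp only [map_add, tmul_add] at *
      rw [hu, hv]

lemma gauge_comp (σ τ : H →ₗ[k] B) :
    gaugeMapR σ ∘ₗ gaugeMapR τ = gaugeMapR (twistedConv σ τ) := by
  apply TensorProduct.ext'
  intro a h
  set g : H ⊗[k] H →ₗ[k] B :=
    (LinearMap.mulRight k a) ∘ₗ LinearMap.mul' k B ∘ₗ TensorProduct.map σ τ ∘ₗ
      (TensorProduct.comm k H H).toLinearMap with hg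
  have key : ∀ x : H ⊗[k] H,
      gaugeMapR σ (TensorProduct.map ((LinearMap.mulRight k a) ∘ₗ τ) LinearMap.id x)
        = (TensorProduct.map g LinearMap.id)
            ((TensorProduct.assoc k H H H).symm
              ((Coalgebra.comul : H →ₗ[k] H ⊗[k] H).lTensor H x)) := by
    intro x
    induction x using TensorProduct.induction_on with
    | zero =>
        rw [LinearMap.map_zero, LinearMap.map_zero, LinearMap.map_zero,
          LinearEquiv.map_zero, LinearMap.map_zero]
    | tmul p q =>
        simp only [TensorProduct.map_tmul, LinearMap.comp_apply, LinearMap.id_apply,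
          LinearMap.lTensor_tmul, gauge_apply]
        generalize (Coalgebra.comul q : H ⊗[k] H) = y
        induction y using TensorProduct.induction_on with
        | zero =>
            rw [tmul_zero, LinearEquiv.map_zero, LinearMap.map_zero, LinearMap.map_zero]
        | tmul u v =>
            simp [hg, LinearMap.mul'_apply, mul_assoc]
        | add u v hu hv =>
            simp only [map_add, tmul_add] at *
            rw [hu, hv]
    | add u v hu hv =>
        simp only [map_add] at *
        rw [hu, hv]
  have lhs : (gaugeMapR σ ∘ₗ gaugeMapR τ) (a ⊗ₜ[k] h)
      = (TensorProduct.map g LinearMap.id)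
          ((Coalgebra.comul : H →ₗ[k] H ⊗[k] H).rTensor H (Coalgebra.comul h)) := by
    rw [LinearMap.comp_apply, gauge_apply, key, Coalgebra.coassoc_symm_apply]
  rw [lhs, gauge_apply]
  have : (LinearMap.mulRight k a) ∘ₗ twistedConv σ τ
      = g ∘ₗ (Coalgebra.comul : H →ₗ[k] H ⊗[k] H) := by
    rw [twistedConv, hg]; rfl
  rw [this]
  generalize (Coalgebra.comul h : H ⊗[k] H) = x
  induction x using TensorProduct.induction_on with
  | zero => simp only [map_zero]
  | tmul p q => simp
  | add u v hu hv => simp only [map_add] at *; rw [hu, hv]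

lemma gauge_unit : gaugeMapR (convUnit : H →ₗ[k] B) = LinearMap.id := by
  apply TensorProduct.ext'
  intro a h
  rw [gauge_apply]
  have : (LinearMap.mulRight k a) ∘ₗ (convUnit : H →ₗ[k] B)
      = ((LinearMap.mulRight k a) ∘ₗ Algebra.linearMap k B) ∘ₗ
        (Coalgebra.counit : H →ₗ[k] k) := rfl
  rw [this, ← LinearMap.comp_id (LinearMap.id : H →ₗ[k] H),
    TensorProduct.map_comp, LinearMap.comp_apply]
  have h2 : (TensorProduct.map (Coalgebra.counit : H →ₗ[k] k) LinearMap.id)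
      (Coalgebra.comul h) = (1 : k) ⊗ₜ[k] h := Coalgebra.rTensor_counit_comul h
  rw [h2]
  simp

theorem statement_3 (τ τ' : H →ₗ[k] B) (hτ1 : τ 1 = 1)
    (hinv : twistedConv τ' τ = (convUnit : H →ₗ[k] B) ∧
            twistedConv τ τ' = (convUnit : H →ₗ[k] B)) :
    Function.Bijective (gaugeMapR τ) ∧
    (gaugeMapR τ' ∘ₗ gaugeMapR τ = LinearMap.id ∧
     gaugeMapR τ ∘ₗ gaugeMapR τ' = LinearMap.id) ∧
    (∀ (a : B) (z : B ⊗[k] H),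
      gaugeMapR τ ((TensorProduct.map (LinearMap.mulRight k a) LinearMap.id) z)
        = (TensorProduct.map (LinearMap.mulRight k a) LinearMap.id) (gaugeMapR τ z)) ∧
    (TensorProduct.map (gaugeMapR τ) LinearMap.id) ∘ₗ
        (TensorProduct.assoc k B H H).symm.toLinearMap ∘ₗ
        (TensorProduct.map LinearMap.id (Coalgebra.comul : H →ₗ[k] H ⊗[k] H))
      = (TensorProduct.assoc k B H H).symm.toLinearMap ∘ₗ
        (TensorProduct.map LinearMap.id (Coalgebra.comul : H →ₗ[k] H ⊗[k] H)) ∘ₗ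
        gaugeMapR τ ∧
    (∀ a : B, gaugeMapR τ (a ⊗ₜ[k] (1 : H)) = a ⊗ₜ[k] (1 : H)) := by
  obtain ⟨hinv1, hinv2⟩ := hinv
  have e1 : gaugeMapR τ' ∘ₗ gaugeMapR τ = LinearMap.id := by
    rw [gauge_comp, hinv1, gauge_unit]
  have e2 : gaugeMapR τ ∘ₗ gaugeMapR τ' = LinearMap.id := by
    rw [gauge_comp, hinv2, gauge_unit]
  refine ⟨⟨Function.LeftInverse.injective (g := gaugeMapR τ')
      (fun x => LinearMap.congr_fun e1 x),
    Function.RightInverse.surjective (g := gaugeMapR τ')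
      (fun x => LinearMap.congr_fun e2 x)⟩, ⟨e1, e2⟩, ?_, ?_, ?_⟩
  · intro a z
    induction z using TensorProduct.induction_on with
    | zero => simp only [map_zero]
    | tmul b h =>
        simp only [TensorProduct.map_tmul, LinearMap.id_apply, LinearMap.mulRight_apply,
          gauge_apply]
        have hmap : (TensorProduct.map ((LinearMap.mulRight k (b * a)) ∘ₗ τ)
              (LinearMap.id : H →ₗ[k] H))
            = TensorProduct.map (LinearMap.mulRight k a) LinearMap.id ∘ₗ
              TensorProduct.map ((LinearMap.mulRight k b) ∘ₗ τ) LinearMap.id := by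
          rw [← TensorProduct.map_comp, LinearMap.id_comp]
          congr 1
          ext x
          simp [mul_assoc]
        rw [hmap, LinearMap.comp_apply]
    | add u v hu hv => simp only [map_add] at *; rw [hu, hv]
  · apply TensorProduct.ext'
    intro a h
    set W : H ⊗[k] H →ₗ[k] B ⊗[k] H :=
      TensorProduct.map ((LinearMap.mulRight k a) ∘ₗ τ) LinearMap.id with hW
    set U : (H ⊗[k] H) ⊗[k] H →ₗ[k] (B ⊗[k] H) ⊗[k] H :=
      TensorProduct.map W LinearMap.id with hU
    have key2 : ∀ x : H ⊗[k] H,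
        (TensorProduct.map (gaugeMapR τ) LinearMap.id)
          ((TensorProduct.assoc k B H H).symm (a ⊗ₜ[k] x))
          = U ((Coalgebra.comul : H →ₗ[k] H ⊗[k] H).rTensor H x) := by
      intro x
      induction x using TensorProduct.induction_on with
      | zero =>
          rw [tmul_zero, LinearEquiv.map_zero, LinearMap.map_zero, LinearMap.map_zero,
            LinearMap.map_zero]
      | tmul p q =>
          simp only [TensorProduct.assoc_symm_tmul, TensorProduct.map_tmul,
            LinearMap.id_apply, LinearMap.rTensor_tmul, hU, hW, gauge_apply]
      | add u v hu hv =>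
          rw [tmul_add, LinearEquiv.map_add, LinearMap.map_add, LinearMap.map_add,
            LinearMap.map_add, hu, hv]
    have key3 : ∀ x : H ⊗[k] H,
        (TensorProduct.assoc k B H H).symm
          ((TensorProduct.map LinearMap.id (Coalgebra.comul : H →ₗ[k] H ⊗[k] H)) (W x))
          = U ((TensorProduct.assoc k H H H).symm
              ((Coalgebra.comul : H →ₗ[k] H ⊗[k] H).lTensor H x)) := by
      intro x
      induction x using TensorProduct.induction_on with
      | zero =>
          rw [LinearMap.map_zero, LinearMap.map_zero, LinearEquiv.map_zero,
            LinearMap.map_zero, LinearEquiv.map_zero, LinearMap.map_zero]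
      | tmul p q =>
          simp only [hW, TensorProduct.map_tmul, LinearMap.comp_apply, LinearMap.id_apply,
            LinearMap.lTensor_tmul, LinearMap.mulRight_apply]
          generalize (Coalgebra.comul q : H ⊗[k] H) = y
          induction y using TensorProduct.induction_on with
          | zero =>
              rw [tmul_zero, LinearEquiv.map_zero, tmul_zero, LinearEquiv.map_zero,
                LinearMap.map_zero]
          | tmul u v =>
              simp [hU, hW]
          | add u v hu hv =>
              rw [tmul_add, LinearEquiv.map_add, tmul_add, LinearEquiv.map_add,
                LinearMap.map_add, hu, hv]
      | add u v hu hv =>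
          rw [LinearMap.map_add, LinearMap.map_add, LinearEquiv.map_add,
            LinearMap.map_add, LinearEquiv.map_add, LinearMap.map_add, hu, hv]
    simp only [LinearMap.comp_apply, LinearEquiv.coe_coe, TensorProduct.map_tmul,
      LinearMap.id_apply]
    rw [key2, gauge_apply, ← hW, key3, Coalgebra.coassoc_symm_apply]
  · intro a
    rw [gauge_apply]
    have h1 : (Coalgebra.comul (1 : H) : H ⊗[k] H) = 1 ⊗ₜ[k] 1 := by
      rw [Bialgebra.comul_one]; rfl
    rw [h1]
    simp [hτ1]
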